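/- arXiv:2602.16055 — 2 statements merged into one kernel-verified Lean document; each statement's English description precedes it below -/
import Mathlib

section
/- For m ≥ 4, let A be the m×m zero-one matrix where row i for 3 ≤ i ≤ m-1 has a single 1 in column 2, row m has 1s in columns 1 and 2, and rows 1 and 2 are all zeroes. Then for all n ≥ 2, the number of A-colored plane trees with n vertices is 2^{n-1} + m - 3. -/
inductive CTree (α : Type) : Type
  | node : α → List (CTree α) → CTree α

namespace CTree

def color {α : Type} : CTree α → α
  | node c _ => c

def children {α : Type} : CTree α → List (CTree α)
  | node _ ts => ts

def size {α : Type} : CTree α → ℕ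
  | node _ ts => 1 + (ts.attach.map fun t => size t.1).sum
decreasing_by
  have := List.sizeOf_lt_of_mem t.2
  simp only [CTree.node.sizeOf_spec]
  omega

def Valid {α : Type} (A : Matrix α α ℕ) : CTree α → Prop
  | node c ts => ∀ t ∈ ts, A c t.color = 1 ∧ Valid A t

end CTree

noncomputable def colorCount {m : ℕ} (A : Matrix (Fin m) (Fin m) ℕ) (i : Fin m) (n : ℕ) : ℕ :=
  {t : CTree (Fin m) | t.Valid A ∧ t.size = n ∧ t.color = i}.ncard

noncomputable def totalCount {α : Type} (A : Matrix α α ℕ) (n : ℕ) : ℕ :=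
  {t : CTree α | t.Valid A ∧ t.size = n}.ncard

lemma CTree.size_node {α : Type} (c : α) (ts : List (CTree α)) :
    (CTree.node c ts).size = 1 + (ts.map CTree.size).sum := by
  rw [CTree.size]; simp [List.attach_map_val]

lemma CTree.valid_node {α : Type} (A : Matrix α α ℕ) (c : α) (ts : List (CTree α)) :
    (CTree.node c ts).Valid A ↔ ∀ t ∈ ts, A c t.color = 1 ∧ t.Valid A := by
  rw [CTree.Valid]

lemma sum_range_le1 (M : ℕ) :
    ∑ x ∈ Finset.range M, (if x ≤ 1 then 1 else 0 : ℕ) = min M 2 := by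
  induction M with
  | zero => simp
  | succ M ih =>
    rw [Finset.sum_range_succ, ih]
    rcases Nat.lt_or_ge M 2 with h | h
    · interval_cases M <;> simp
    · have : ¬ M ≤ 1 := by omega
      simp [this]; omega

lemma sum_range_ge2 (M : ℕ) :
    ∑ x ∈ Finset.range M, (if 2 ≤ x then 1 else 0 : ℕ) = M - 2 := by
  induction M with
  | zero => simp
  | succ M ih =>
    rw [Finset.sum_range_succ, ih]
    rcases Nat.lt_or_ge M 2 with h | h
    · have : ¬ 2 ≤ M := by omega
      simp [this]; omega
    · simp [h]; omega

/-- For `m ≥ 4`, the matrix whose rows `3..m-1` have a single one in column 2, whose row `m`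
has ones in columns 1 and 2, and whose rows 1, 2 are zero, has counting sequence
`2^{n-1} + m - 3` for `n ≥ 2`. -/
theorem stmt12 (m : ℕ) (hm : 4 ≤ m) (A : Matrix (Fin m) (Fin m) ℕ)
    (hA : ∀ i j : Fin m,
      A i j = if i.val = m - 1 then (if j.val ≤ 1 then 1 else 0)
        else if 2 ≤ i.val then (if j.val = 1 then 1 else 0) else 0)
    (n : ℕ) (hn : 2 ≤ n) :
    totalCount A n = 2 ^ (n - 1) + m - 3 := by
  classical
  -- basic facts about A
  have hA_le : ∀ i j : Fin m, A i j = 1 → j.val ≤ 1 := by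
    intro i j h
    rw [hA] at h
    by_contra hj
    simp only [hj, if_false] at h
    split at h
    · simp at h
    · split at h
      · have : ¬ j.val = 1 := by omega
        simp [this] at h
      · simp at h
  have hA_row0 : ∀ i j : Fin m, i.val ≤ 1 → A i j = 0 := by
    intro i j hi
    rw [hA]
    have h1 : ¬ i.val = m - 1 := by omega
    have h2 : ¬ 2 ≤ i.val := by omega
    simp [h1, h2]
  -- the parametrization
  set g : Fin m × (Fin (n - 1) → Fin m) → CTree (Fin m) :=
    fun p => CTree.node p.1 (List.ofFn fun j => CTree.node (p.2 j) []) with hg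
  have hg_inj : Function.Injective g := by
    intro p q h
    simp only [hg, CTree.node.injEq] at h
    obtain ⟨h1, h2⟩ := h
    have := List.ofFn_inj.mp h2
    refine Prod.ext h1 (funext fun j => ?_)
    have := congrFun this j
    simpa [CTree.node.injEq] using this
  set F : Finset (CTree (Fin m)) :=
    (Finset.univ.filter fun p : Fin m × (Fin (n - 1) → Fin m) =>
      ∀ j, A p.1 (p.2 j) = 1).image g with hF
  have hset : {t : CTree (Fin m) | t.Valid A ∧ t.size = n} = ↑F := by
    ext t
    simp only [Set.mem_setOf_eq, hF, Finset.coe_image, Set.mem_image, Finset.mem_coe,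
      Finset.mem_filter, Finset.mem_univ, true_and]
    constructor
    · rintro ⟨hv, hs⟩
      obtain ⟨c, ts⟩ := t
      rw [CTree.valid_node] at hv
      -- every child is a leaf
      have hleaf : ∀ s ∈ ts, s = CTree.node s.color [] := by
        intro s hs'
        obtain ⟨d, ss⟩ := s
        have hd := hA_le c d ((hv _ hs').1)
        have hvs := (hv _ hs').2
        rw [CTree.valid_node] at hvs
        cases ss with
        | nil => rfl
        | cons u us =>
          exfalso
          have := (hvs u (by simp)).1
          rw [hA_row0 d u.color hd] at this
          exact absurd this (by norm_num)
      have hsizes : ∀ s ∈ ts, s.size = 1 := by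
        intro s hs'
        rw [hleaf s hs', CTree.size_node]; simp
      have hlen : ts.length = n - 1 := by
        rw [CTree.size_node] at hs
        rw [List.map_congr_left hsizes] at hs
        simp [List.sum_replicate] at hs
        omega
      refine ⟨⟨c, fun j => (ts.get (Fin.cast hlen.symm j)).color⟩, ?_, ?_⟩
      · intro j
        exact (hv _ (ts.get_mem _)).1
      · simp only [hg]
        congr 1
        apply List.ext_get
        · simp [hlen]
        · intro i h1 h2
          rw [hleaf (ts.get ⟨i, h2⟩) (ts.get_mem _)]
          simp [List.get_ofFn]
    · rintro ⟨⟨c, v⟩, hP, rfl⟩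
      constructor
      · rw [hg, CTree.valid_node]
        intro s hs
        rw [List.mem_ofFn] at hs
        obtain ⟨j, rfl⟩ := hs
        refine ⟨hP j, ?_⟩
        rw [CTree.valid_node]
        simp
      · rw [hg, CTree.size_node]
        simp only [List.map_ofFn]
        rw [show ((fun t : CTree (Fin m) => t.size) ∘ fun j : Fin (n-1) => CTree.node (v j) []) = fun _ => 1 from funext fun j => by rw [Function.comp, CTree.size_node]; simp]
        simp
        omega
  rw [totalCount, hset, Set.ncard_coe_finset, hF,
    Finset.card_image_of_injective _ hg_inj]
  -- count pairs
  rw [Finset.card_filter]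
  rw [Fintype.sum_prod_type]
  have hinner : ∀ i : Fin m,
      ∑ v : Fin (n-1) → Fin m, (if (∀ j, A i (v j) = 1) then 1 else 0 : ℕ)
        = (Finset.univ.filter fun x : Fin m => A i x = 1).card ^ (n - 1) := by
    intro i
    rw [← Finset.card_filter]
    have : (Finset.univ.filter fun v : Fin (n-1) → Fin m => ∀ j, A i (v j) = 1)
        = Fintype.piFinset (fun _ : Fin (n-1) => Finset.univ.filter fun x => A i x = 1) := by
      ext v
      simp [Fintype.mem_piFinset]
    rw [this, Fintype.card_piFinset]
    simp
  simp_rw [hinner]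
  have card_filter_val : ∀ (p : ℕ → Prop) [DecidablePred p],
      (Finset.univ.filter fun x : Fin m => p x.val).card
        = ∑ x ∈ Finset.range m, if p x then 1 else 0 := by
    intro p _
    rw [Finset.card_filter]
    exact Fin.sum_univ_eq_sum_range (fun x => if p x then 1 else 0) m
  have hcard : ∀ i : Fin m, (Finset.univ.filter fun x : Fin m => A i x = 1).card
      = if i.val = m - 1 then 2 else if 2 ≤ i.val then 1 else 0 := by
    intro i
    rcases Nat.lt_or_ge i.val 2 with hi | hi
    · have h1 : ¬ i.val = m - 1 := by omega
      have h2 : ¬ 2 ≤ i.val := by omega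
      have h3 : ∀ x : Fin m, ¬ A i x = 1 := fun x => by
        rw [hA_row0 i x (by omega)]; norm_num
      simp [h1, h2, Finset.filter_eq_empty_iff.mpr (fun x _ => h3 x)]
    · rcases eq_or_ne i.val (m - 1) with he | he
      · have h3 : ∀ x : Fin m, A i x = 1 ↔ x.val ≤ 1 := by
          intro x
          rw [hA]
          simp only [he, if_true]
          rcases Nat.lt_or_ge x.val 2 with h | h
          · simp [show x.val ≤ 1 by omega]
          · simp [show ¬ x.val ≤ 1 by omega]
        have : (Finset.univ.filter fun x : Fin m => A i x = 1)
            = Finset.univ.filter fun x : Fin m => x.val ≤ 1 := by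
          apply Finset.filter_congr; intro x _; simp [h3 x]
        rw [this, card_filter_val (fun x => x ≤ 1), sum_range_le1]
        simp [he]
        omega
      · have h3 : ∀ x : Fin m, A i x = 1 ↔ x.val = 1 := by
          intro x
          rw [hA]
          simp only [he, if_false, hi, if_true]
          by_cases hx : x.val = 1 <;> simp [hx]
        have : (Finset.univ.filter fun x : Fin m => A i x = 1)
            = Finset.univ.filter fun x : Fin m => x.val = 1 := by
          apply Finset.filter_congr; intro x _; simp [h3 x]
        rw [this, card_filter_val (fun x => x = 1)]
        rw [Finset.sum_ite_eq' (Finset.range m) 1 (fun _ => 1)]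
        simp [he, hi, Finset.mem_range]
        omega
  simp_rw [hcard]
  rw [Fin.sum_univ_eq_sum_range
    (fun x => (if x = m - 1 then 2 else if 2 ≤ x then 1 else 0) ^ (n - 1)) m]
  obtain ⟨M, rfl⟩ : ∃ M, m = M + 1 := ⟨m - 1, by omega⟩
  rw [Finset.sum_range_succ]
  have hlast : (M + 1) - 1 = M := by omega
  have hrest : ∑ x ∈ Finset.range M,
      (if x = (M + 1) - 1 then 2 else if 2 ≤ x then 1 else 0 : ℕ) ^ (n - 1)
      = ∑ x ∈ Finset.range M, (if 2 ≤ x then 1 else 0 : ℕ) := by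
    apply Finset.sum_congr rfl
    intro x hx
    rw [Finset.mem_range] at hx
    have : ¬ x = (M + 1) - 1 := by omega
    rw [if_neg this]
    split
    · exact one_pow _
    · exact Nat.zero_pow (by omega)
  rw [hrest, sum_range_ge2, hlast, if_pos rfl]
  have : (2 : ℕ) ^ (n - 1) ≥ 1 := Nat.one_le_two_pow
  omega
end

section
/- For m ≥ 4, let B be the m×m zero-one matrix where rows 2 and 3 each have a single 1 in column m, rows 4 through m each have a single 1 in column 1, and row 1 is all zeroes. Then for all n ≥ 2, the number of B-colored plane trees with n vertices is 2^{n-1} + m - 3. -/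
namespace CTree

theorem size_node_s13 {α : Type} (c : α) (ts : List (CTree α)) :
    size (node c ts) = 1 + (ts.map size).sum := by
  rw [size]
  congr 1
  exact congrArg List.sum (List.attach_map_val (l := ts) (f := size))

theorem valid_node_s13 {α : Type} (A : Matrix α α ℕ) (c : α) (ts : List (CTree α)) :
    Valid A (node c ts) ↔ ∀ t ∈ ts, A c t.color = 1 ∧ Valid A t := by rw [Valid]

end CTree

open CTree

section Aux

/-- leaf of color 0 -/
def leaf0 (m : ℕ) (hm : 4 ≤ m) : CTree (Fin m) := node ⟨0, by omega⟩ []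

/-- height-1 tree with root color m-1 and k leaf children -/
def mkChild (m : ℕ) (hm : 4 ≤ m) (k : ℕ) : CTree (Fin m) :=
  node ⟨m - 1, by omega⟩ (List.replicate k (leaf0 m hm))

theorem leaf0_size (m : ℕ) (hm : 4 ≤ m) : (leaf0 m hm).size = 1 := by
  simp [leaf0, size_node_s13]

theorem mkChild_size (m : ℕ) (hm : 4 ≤ m) (k : ℕ) : (mkChild m hm k).size = k + 1 := by
  simp [mkChild, size_node_s13, leaf0_size, List.map_replicate, List.sum_replicate]
  omega

theorem mkChild_inj (m : ℕ) (hm : 4 ≤ m) : Function.Injective (mkChild m hm) := by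
  intro a b h
  have := congrArg CTree.size h
  rw [mkChild_size, mkChild_size] at this
  omega

theorem exists_map_of_forall {α β : Type} (g : β → α) :
    ∀ (l : List α), (∀ x ∈ l, ∃ k, x = g k) → ∃ ks : List β, l = ks.map g := by
  intro l
  induction l with
  | nil => intro _; exact ⟨[], rfl⟩
  | cons a l ih =>
    intro h
    obtain ⟨k, hk⟩ := h a (by simp)
    obtain ⟨ks, hks⟩ := ih (fun x hx => h x (by simp [hx]))
    exact ⟨k :: ks, by simp [hk, hks]⟩

end Aux

/-- For `m ≥ 4`, the matrix whose rows 2 and 3 have a single one in column `m`, whose rows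
`4..m` have a single one in column 1, and whose row 1 is zero, has counting sequence
`2^{n-1} + m - 3` for `n ≥ 2`. -/
theorem stmt13 (m : ℕ) (hm : 4 ≤ m) (B : Matrix (Fin m) (Fin m) ℕ)
    (hB : ∀ i j : Fin m,
      B i j = if i.val = 1 ∨ i.val = 2 then (if j.val = m - 1 then 1 else 0)
        else if 3 ≤ i.val then (if j.val = 0 then 1 else 0) else 0)
    (n : ℕ) (hn : 2 ≤ n) :
    totalCount B n = 2 ^ (n - 1) + m - 3 := by
  -- basic facts
  have hleaf_valid : Valid B (leaf0 m hm) := by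
    rw [leaf0, valid_node_s13]; simp
  -- valid trees with root color 0 are leaves
  have hvalid0 : ∀ t : CTree (Fin m), Valid B t → t.color.val = 0 → t = leaf0 m hm := by
    rintro ⟨c, ts⟩ hv hc
    rw [valid_node_s13] at hv
    have hts : ts = [] := by
      by_contra h
      obtain ⟨t', ht'⟩ := List.exists_mem_of_ne_nil ts h
      have := (hv t' ht').1
      rw [hB] at this
      simp only [CTree.color] at hc
      rw [if_neg (by omega), if_neg (by omega)] at this
      omega
    subst hts
    simp only [CTree.color] at hc
    rw [leaf0]
    congr 1
    exact Fin.ext hc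
  -- valid trees with root color m-1 are mkChild
  have hvalidTop : ∀ t : CTree (Fin m), Valid B t → t.color.val = m - 1 →
      ∃ k, t = mkChild m hm k := by
    rintro ⟨c, ts⟩ hv hc
    rw [valid_node_s13] at hv
    simp only [CTree.color] at hc
    have hch : ∀ t' ∈ ts, t' = leaf0 m hm := by
      intro t' ht'
      obtain ⟨hB1, hval⟩ := hv t' ht'
      rw [hB] at hB1
      rw [if_neg (by omega), if_pos (by omega)] at hB1
      have : t'.color.val = 0 := by by_contra h; rw [if_neg h] at hB1; omega
      exact hvalid0 t' hval this
    refine ⟨ts.length, ?_⟩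
    rw [mkChild]
    congr 1
    · exact Fin.ext hc
    · exact List.eq_replicate_length.2 hch
  have hmk_valid : ∀ k, Valid B (mkChild m hm k) := by
    intro k
    rw [mkChild, valid_node_s13]
    intro t' ht'
    rw [List.eq_of_mem_replicate ht']
    refine ⟨?_, hleaf_valid⟩
    rw [hB, leaf0]
    simp only [CTree.color]
    rw [if_neg (by omega), if_pos (by omega), if_pos (by simp)]
  -- the encoding
  set S : Set (CTree (Fin m)) := {t : CTree (Fin m) | t.Valid B ∧ t.size = n} with hS
  let f : (Fin 2 × Composition (n - 1)) ⊕ Fin (m - 3) → CTree (Fin m) :=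
    fun x => match x with
    | Sum.inl (j, comp) =>
        node ⟨j.val + 1, by omega⟩ (comp.blocks.map (fun b => mkChild m hm (b - 1)))
    | Sum.inr r =>
        node ⟨r.val + 3, by omega⟩ (List.replicate (n - 1) (leaf0 m hm))
  have hrange : Set.range f = S := by
    apply Set.Subset.antisymm
    · rintro t ⟨x, rfl⟩
      match x with
      | Sum.inl (j, comp) =>
        constructor
        · rw [valid_node_s13]
          intro t' ht'
          simp only [List.mem_map] at ht'
          obtain ⟨b, hb, rfl⟩ := ht'
          refine ⟨?_, hmk_valid _⟩
          rw [hB, mkChild]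
          simp only [CTree.color]
          have : j.val < 2 := j.isLt
          rw [if_pos (by omega), if_pos (by simp)]
        · rw [size_node_s13, List.map_map]
          have : ∀ b ∈ comp.blocks, (CTree.size ∘ fun b => mkChild m hm (b - 1)) b = b := by
            intro b hb
            have hbpos := comp.blocks_pos hb
            simp [mkChild_size]
            omega
          rw [List.map_congr_left this]
          simp only [List.map_id']
          rw [comp.blocks_sum]
          omega
      | Sum.inr r =>
        constructor
        · rw [valid_node_s13]
          intro t' ht'
          rw [List.eq_of_mem_replicate ht']
          refine ⟨?_, hleaf_valid⟩
          rw [hB, leaf0]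
          simp only [CTree.color]
          rw [if_neg (by omega), if_pos (by omega), if_pos (by simp)]
        · rw [size_node_s13]
          simp [leaf0_size, List.map_replicate, List.sum_replicate]
          omega
    · rintro ⟨c, ts⟩ ⟨hv, hsize⟩
      rw [valid_node_s13] at hv
      rw [size_node_s13] at hsize
      -- c.val cases
      have hts_ne : ts ≠ [] := by
        rintro rfl
        simp at hsize
        omega
      obtain ⟨t0, ht0⟩ := List.exists_mem_of_ne_nil ts hts_ne
      have hc_ne0 : c.val ≠ 0 := by
        intro h
        have := (hv t0 ht0).1
        rw [hB, if_neg (by omega), if_neg (by omega)] at this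
        omega
      rcases lt_or_ge c.val 3 with hc3 | hc3
      · -- c.val = 1 or 2
        have hch : ∀ t' ∈ ts, ∃ k, t' = mkChild m hm k := by
          intro t' ht'
          obtain ⟨hB1, hval⟩ := hv t' ht'
          rw [hB, if_pos (by omega)] at hB1
          have : t'.color.val = m - 1 := by by_contra h; rw [if_neg h] at hB1; omega
          exact hvalidTop t' hval this
        obtain ⟨ks, rfl⟩ := exists_map_of_forall (mkChild m hm) ts hch
        have hsum : (ks.map (· + 1)).sum = n - 1 := by
          rw [List.map_map] at hsize
          have : ∀ k ∈ ks, (CTree.size ∘ mkChild m hm) k = k + 1 := by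
            intro k hk; simp [mkChild_size]
          rw [List.map_congr_left this] at hsize
          have h2 : (ks.map (· + 1)).sum = (ks.map (fun k => k + 1)).sum := rfl
          rw [h2]
          omega
        refine ⟨Sum.inl (⟨c.val - 1, by omega⟩,
          ⟨ks.map (· + 1), fun {i} hi => ?_, hsum⟩), ?_⟩
        · simp only [List.mem_map] at hi
          obtain ⟨k, _, rfl⟩ := hi
          omega
        · simp only [f]
          congr 1
          · exact Fin.ext (by simp; omega)
          · rw [List.map_map]
            apply List.map_congr_left
            intro k hk
            simp [mkChild]
      · -- c.val ≥ 3
        have hch : ∀ t' ∈ ts, t' = leaf0 m hm := by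
          intro t' ht'
          obtain ⟨hB1, hval⟩ := hv t' ht'
          rw [hB, if_neg (by omega), if_pos (by omega)] at hB1
          have : t'.color.val = 0 := by by_contra h; rw [if_neg h] at hB1; omega
          exact hvalid0 t' hval this
        have hts_rep : ts = List.replicate ts.length (leaf0 m hm) :=
          List.eq_replicate_length.2 hch
        have hlen : ts.length = n - 1 := by
          rw [hts_rep] at hsize
          simp [leaf0_size, List.map_replicate, List.sum_replicate] at hsize
          omega
        refine ⟨Sum.inr ⟨c.val - 3, by omega⟩, ?_⟩
        simp only [f]
        rw [hts_rep, hlen]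
        congr 1
        exact Fin.ext (by simp; omega)
  have hfinj : Function.Injective f := by
    rintro (⟨j, comp⟩ | r) (⟨j', comp'⟩ | r') h <;> simp only [f, CTree.node.injEq] at h
    · obtain ⟨h1, h2⟩ := h
      have hj : j = j' := by
        have := congrArg Fin.val h1
        simp at this
        exact Fin.ext (by omega)
      have hcomp : comp = comp' := by
        apply Composition.ext
        have h3 := congrArg (List.map CTree.size) h2
        rw [List.map_map, List.map_map] at h3
        have e1 : ∀ (comp0 : Composition (n-1)),
            comp0.blocks.map (CTree.size ∘ fun b => mkChild m hm (b - 1)) = comp0.blocks := by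
          intro comp0
          rw [List.map_congr_left (l := comp0.blocks)
            (g := fun b => b) (fun b hb => by
              have := comp0.blocks_pos hb
              simp [mkChild_size]; omega)]
          exact List.map_id _
        rw [e1, e1] at h3
        exact h3
      rw [hj, hcomp]
    · exfalso
      have := congrArg Fin.val h.1
      simp at this
      omega
    · exfalso
      have := congrArg Fin.val h.1
      simp at this
      omega
    · have := congrArg Fin.val h.1
      simp at this
      exact congrArg Sum.inr (Fin.ext (by omega))
  have hcard : S.ncard = Nat.card ((Fin 2 × Composition (n - 1)) ⊕ Fin (m - 3)) := by
    rw [← hrange, ← Nat.card_coe_set_eq, Nat.card_range_of_injective hfinj]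
  rw [totalCount, ← hS, hcard, Nat.card_eq_fintype_card]
  simp only [Fintype.card_sum, Fintype.card_prod, Fintype.card_fin, composition_card]
  have h2 : 2 ^ (n - 1) = 2 * 2 ^ (n - 1 - 1) := by
    conv_lhs => rw [show n - 1 = (n - 1 - 1) + 1 from by omega]
    rw [pow_succ]
    ring
  omega
end
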